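/- A sequence (g_k) in G converges if and only if for every N the sequence Π_N(g_k) ∈ G_N is eventually constant and the sequence of reduced-word lifts (σ(g_k)) has compact closure in X_∞. (In particular, if (g_k) converges then both conditions hold, and conversely both conditions imply all subsequential limits of σ(g_k) are q-equivalent, so g_k converges in the quotient.) -/

import Mathlib

open Filter Topology

instance : TopologicalSpace (List (ℕ × Bool)) := ⊥

instance : DiscreteTopology (List (ℕ × Bool)) := ⟨rfl⟩

/-- `X_∞ = lim← Xₙ`, `Xₙ` the discrete free monoid on the letters of index
`< n`, bonding retractions deleting the top generator pair. -/
def Xinf : Type :=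
  {x : ℕ → List (ℕ × Bool) //
    (∀ n, ∀ l ∈ x n, l.1 < n) ∧
    ∀ n, (x (n + 1)).filter (fun l => decide (l.1 < n)) = x n}

instance : TopologicalSpace Xinf :=
  inferInstanceAs (TopologicalSpace
    {x : ℕ → List (ℕ × Bool) //
      (∀ n, ∀ l ∈ x n, l.1 < n) ∧
      ∀ n, (x (n + 1)).filter (fun l => decide (l.1 < n)) = x n})

/-- The equivalence identifying words in `X_∞` with the same image in every
free group; the quotient is the Hawaiian earring group model `G`. -/
def qsetoid : Setoid Xinf :=
  ⟨fun u v => ∀ n, FreeGroup.mk (u.1 n) = FreeGroup.mk (v.1 n),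
    ⟨fun _ _ => rfl, fun h n => (h n).symm, fun h1 h2 n => (h1 n).trans (h2 n)⟩⟩

namespace Stmt19Aux

open List

/-! ### Basic topological facts about `Xinf` -/

lemma continuous_coord (N : ℕ) : Continuous (fun u : Xinf => u.1 N) :=
  (continuous_apply N).comp continuous_subtype_val

lemma isOpen_coord (N : ℕ) (T : Set (List (ℕ × Bool))) :
    IsOpen {u : Xinf | u.1 N ∈ T} :=
  (isOpen_discrete T).preimage (continuous_coord N)

lemma isClosed_coord (N : ℕ) (T : Set (List (ℕ × Bool))) :
    IsClosed {u : Xinf | u.1 N ∈ T} :=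
  (isClosed_discrete T).preimage (continuous_coord N)

instance : FirstCountableTopology Xinf := by
  have := TopologicalSpace.firstCountableTopology_induced Xinf (ℕ → List (ℕ × Bool)) Subtype.val
  exact this

lemma isQuotientMap_qmk : IsQuotientMap (Quotient.mk qsetoid) :=
  isQuotientMap_quot_mk

lemma continuous_qmk : Continuous (Quotient.mk qsetoid) :=
  continuous_quot_mk

/-! ### Free group word lemmas -/

/-- The retraction of `FreeGroup ℕ` killing all generators of index `≥ N`. -/
noncomputable def fhom (N : ℕ) : FreeGroup ℕ →* FreeGroup ℕ :=
  FreeGroup.lift (fun i => if i < N then FreeGroup.of i else 1)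

lemma mk_single_inv (i : ℕ) : FreeGroup.mk [(i, false)] = (FreeGroup.of i)⁻¹ := by
  apply eq_inv_of_mul_eq_one_left
  rw [show FreeGroup.of i = FreeGroup.mk [(i, true)] from rfl, FreeGroup.mul_mk,
    FreeGroup.one_eq_mk]
  exact Quot.sound (@FreeGroup.Red.Step.not _ [] [] i false)

/-- Filtering a word by index `< N` corresponds to applying `fhom N`. -/
lemma mk_filter (N : ℕ) (L : List (ℕ × Bool)) :
    FreeGroup.mk (L.filter (fun l => decide (l.1 < N))) = fhom N (FreeGroup.mk L) := by
  induction L with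
  | nil =>
      rw [show (List.filter (fun l => decide (l.1 < N)) [] : List (ℕ × Bool)) = [] from rfl,
        ← FreeGroup.one_eq_mk, map_one]
  | cons a L ih =>
      obtain ⟨i, b⟩ := a
      have hsplit : FreeGroup.mk ((i, b) :: L) = FreeGroup.mk [(i, b)] * FreeGroup.mk L := by
        rw [FreeGroup.mul_mk]; rfl
      have hsingle : fhom N (FreeGroup.mk [(i, b)])
          = cond b (if i < N then FreeGroup.of i else 1)
              ((if i < N then FreeGroup.of i else 1))⁻¹ := by
        simp [fhom, FreeGroup.lift_mk]
      rw [hsplit, map_mul, ← ih]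
      by_cases hi : i < N
      · have hf : List.filter (fun l => decide (l.1 < N)) ((i, b) :: L)
            = (i, b) :: List.filter (fun l => decide (l.1 < N)) L := by
          simp [hi]
        rw [hf, show FreeGroup.mk ((i, b) :: List.filter (fun l => decide (l.1 < N)) L)
            = FreeGroup.mk [(i, b)] * FreeGroup.mk (List.filter (fun l => decide (l.1 < N)) L)
            from by rw [FreeGroup.mul_mk]; rfl]
        congr 1
        rw [hsingle, if_pos hi]
        cases b
        · exact mk_single_inv i
        · rfl
      · have hf : List.filter (fun l => decide (l.1 < N)) ((i, b) :: L)
            = List.filter (fun l => decide (l.1 < N)) L := by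
          simp [hi]
        rw [hf, hsingle, if_neg hi]
        cases b <;> simp
      
lemma coord_filter (u : Xinf) {N m : ℕ} (h : N ≤ m) :
    (u.1 m).filter (fun l => decide (l.1 < N)) = u.1 N := by
  induction m with
  | zero =>
      have hN : N = 0 := Nat.le_zero.mp h
      subst hN
      have : u.1 0 = [] := by
        apply List.eq_nil_iff_forall_not_mem.mpr
        intro a ha
        exact absurd (u.2.1 0 a ha) (Nat.not_lt_zero _)
      rw [this]; rfl
  | succ m ih =>
      rcases Nat.lt_or_ge N (m + 1) with hlt | hge
      · have hNm : N ≤ m := Nat.lt_succ_iff.mp hlt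
        have h1 : (u.1 (m + 1)).filter (fun l => decide (l.1 < m)) = u.1 m := u.2.2 m
        calc (u.1 (m + 1)).filter (fun l => decide (l.1 < N))
            = ((u.1 (m + 1)).filter (fun l => decide (l.1 < m))).filter
                (fun l => decide (l.1 < N)) := by
              rw [List.filter_filter]
              apply List.filter_congr
              intro a _
              by_cases ha : a.1 < N
              · simp [ha, lt_of_lt_of_le ha hNm]
              · simp [ha]
          _ = (u.1 m).filter (fun l => decide (l.1 < N)) := by rw [h1]
          _ = u.1 N := ih hNm
      · have hN : N = m + 1 := le_antisymm h hge
        subst hN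
        apply List.filter_eq_self.mpr
        intro a ha
        exact decide_eq_true (u.2.1 (m + 1) a ha)

lemma mk_coord (u : Xinf) {N m : ℕ} (h : N ≤ m) :
    fhom N (FreeGroup.mk (u.1 m)) = FreeGroup.mk (u.1 N) := by
  rw [← mk_filter, coord_filter u h]

/-! ### The closedness of `Xinf` inside the product space -/

lemma isClosed_xinf_set :
    IsClosed {x : ℕ → List (ℕ × Bool) |
      (∀ n, ∀ l ∈ x n, l.1 < n) ∧
      ∀ n, (x (n + 1)).filter (fun l => decide (l.1 < n)) = x n} := by
  have h1 : IsClosed {x : ℕ → List (ℕ × Bool) | ∀ n, ∀ l ∈ x n, l.1 < n} := by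
    have : {x : ℕ → List (ℕ × Bool) | ∀ n, ∀ l ∈ x n, l.1 < n}
        = ⋂ n, {x | x n ∈ {L : List (ℕ × Bool) | ∀ l ∈ L, l.1 < n}} := by
      ext x; simp [Set.mem_iInter]
    rw [this]
    exact isClosed_iInter fun n =>
      (isClosed_discrete _).preimage (continuous_apply n)
  have h2 : IsClosed {x : ℕ → List (ℕ × Bool) |
      ∀ n, (x (n + 1)).filter (fun l => decide (l.1 < n)) = x n} := by
    have : {x : ℕ → List (ℕ × Bool) |
        ∀ n, (x (n + 1)).filter (fun l => decide (l.1 < n)) = x n}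
        = ⋂ n, {x | (x (n + 1)).filter (fun l => decide (l.1 < n)) = x n} := by
      ext x; simp [Set.mem_iInter]
    rw [this]
    refine isClosed_iInter fun n => ?_
    exact isClosed_eq
      ((continuous_of_discreteTopology
        (f := fun L : List (ℕ × Bool) => L.filter (fun l => decide (l.1 < n)))).comp
        (continuous_apply (n + 1)))
      (continuous_apply n)
  exact h1.inter h2

lemma isEmbedding_val : Topology.IsEmbedding (Subtype.val : Xinf → (ℕ → List (ℕ × Bool))) :=
  Topology.IsEmbedding.subtypeVal

lemma range_val :
    Set.range (Subtype.val : Xinf → (ℕ → List (ℕ × Bool)))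
      = {x : ℕ → List (ℕ × Bool) |
      (∀ n, ∀ l ∈ x n, l.1 < n) ∧
      ∀ n, (x (n + 1)).filter (fun l => decide (l.1 < n)) = x n} :=
  Subtype.range_coe_subtype

/-- A subset of `Xinf` all of whose coordinate projections lie in finite sets is
contained in a compact set. -/
lemma isCompact_of_finite_coords (F : ℕ → Set (List (ℕ × Bool)))
    (hF : ∀ N, (F N).Finite) :
    IsCompact ((Subtype.val : Xinf → (ℕ → List (ℕ × Bool))) ⁻¹' Set.pi Set.univ F) := by
  rw [isEmbedding_val.isInducing.isCompact_iff]
  have hS : IsCompact (Set.pi Set.univ F) := isCompact_univ_pi fun N => (hF N).isCompact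
  have himg : (Subtype.val : Xinf → (ℕ → List (ℕ × Bool))) ''
      ((Subtype.val : Xinf → (ℕ → List (ℕ × Bool))) ⁻¹' Set.pi Set.univ F)
      = Set.pi Set.univ F ∩ Set.range (Subtype.val : Xinf → (ℕ → List (ℕ × Bool))) :=
    Set.image_preimage_eq_inter_range
  rw [himg, range_val]
  exact hS.inter_right isClosed_xinf_set

/-! ### Words with bounded length and entries `< N` form a finite set -/

lemma finite_words (N C : ℕ) :
    {L : List (ℕ × Bool) | (∀ l ∈ L, l.1 < N) ∧ L.length ≤ C}.Finite := by
  have h := List.finite_length_le (Fin N × Bool) C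
  apply Set.Finite.subset (h.image (fun l => l.map (fun x => ((x.1 : ℕ), x.2))))
  rintro L ⟨hlt, hlen⟩
  refine ⟨L.pmap (fun x hx => ((⟨x.1, hx⟩ : Fin N), x.2)) (fun a ha => hlt a ha), ?_, ?_⟩
  · simpa using hlen
  · show List.map (fun x : Fin N × Bool => ((x.1 : ℕ), x.2))
        (L.pmap (fun x hx => ((⟨x.1, hx⟩ : Fin N), x.2)) (fun a ha => hlt a ha)) = L
    rw [List.map_pmap]
    have : ∀ (l : List (ℕ × Bool)) (H : ∀ a ∈ l, a.1 < N),
        (l.pmap (fun (x : ℕ × Bool) (hx : x.1 < N) =>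
          (((⟨x.1, hx⟩ : Fin N) : ℕ), x.2)) H) = l := by
      intro l H
      induction l with
      | nil => rfl
      | cons a l ih => simp [ih]
    exact this L _

end Stmt19Aux

open Stmt19Aux List

/-- Claim 2 of Lemma `convcrit`: a sequence `(g_k)` in the quotient `G` of
`X_∞` (with the quotient topology) converges if and only if for every `N` the
sequence of projections `Π_N(g_k) ∈ G_N` is eventually constant and the
sequence of reduced-word lifts `σ(g_k)` has compact closure in `X_∞`.  Here
`P` is the family of induced projections `Π_N : G → G_N` and `σq : G → X_∞`
is the injection assigning to `g` the coordinatewise limit of reduced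
representatives. -/
theorem stmt_19
    (P : ℕ → Quotient qsetoid → FreeGroup ℕ)
    (hP : ∀ (u : Xinf) (n : ℕ), P n (Quotient.mk qsetoid u) = FreeGroup.mk (u.1 n))
    (σq : Quotient qsetoid → Xinf)
    (hσ : ∀ u : Xinf, ∀ N, ∃ M, ∀ m, M ≤ m →
      (σq (Quotient.mk qsetoid u)).1 N =
        ((FreeGroup.mk (u.1 m)).toWord).filter (fun l => decide (l.1 < N)))
    (gs : ℕ → Quotient qsetoid) :
    (∃ l, Tendsto gs atTop (𝓝 l)) ↔
      ((∀ N, ∃ M, ∀ k, M ≤ k → P N (gs k) = P N (gs M)) ∧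
        IsCompact (closure (Set.range fun k => σq (gs k)))) := by
  classical
  -- `σq g` evaluated at level `N` has the correct image in the free group.
  have mk_sigma : ∀ (g : Quotient qsetoid) (N : ℕ),
      FreeGroup.mk ((σq g).1 N) = P N g := by
    intro g N
    obtain ⟨u, rfl⟩ := Quotient.exists_rep g
    obtain ⟨M, hM⟩ := hσ u N
    rw [hM (max M N) (le_max_left _ _), mk_filter, FreeGroup.mk_toWord,
      mk_coord u (le_max_right M N), hP]
  -- a word sequence whose projections all agree with `g` represents `g`.
  have mk_eq_of_proj : ∀ (u : Xinf) (g : Quotient qsetoid),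
      (∀ m, FreeGroup.mk (u.1 m) = P m g) → Quotient.mk qsetoid u = g := by
    intro u g h
    obtain ⟨w, rfl⟩ := Quotient.exists_rep g
    exact Quotient.sound (fun n => (h n).trans (hP w n))
  -- `σq` is a section of the quotient map.
  have q_sigma : ∀ g : Quotient qsetoid, Quotient.mk qsetoid (σq g) = g := by
    intro g
    exact mk_eq_of_proj _ g (fun m => mk_sigma g m)
  -- `σq g` at level `N` is a sublist of the level-`N` word of any representative.
  have sigma_sublist : ∀ (u : Xinf) (N : ℕ),
      (σq (Quotient.mk qsetoid u)).1 N <+ u.1 N := by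
    intro u N
    obtain ⟨M, hM⟩ := hσ u N
    rw [hM (max M N) (le_max_left _ _)]
    have h1 : (FreeGroup.mk (u.1 (max M N))).toWord <+ u.1 (max M N) := by
      rw [FreeGroup.toWord_mk]
      exact FreeGroup.Red.sublist FreeGroup.reduce.red
    have h2 := h1.filter (fun l => decide (l.1 < N))
    rwa [coord_filter u (le_max_right M N)] at h2
  constructor
  · rintro ⟨l, hl⟩
    constructor
    · -- eventual constancy of projections
      intro N
      have hopen : IsOpen {g : Quotient qsetoid | P N g = P N l} := by
        rw [← isQuotientMap_qmk.isOpen_preimage]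
        have : (Quotient.mk qsetoid) ⁻¹' {g : Quotient qsetoid | P N g = P N l}
            = {u : Xinf | u.1 N ∈ {L | FreeGroup.mk L = P N l}} := by
          ext u
          simp only [Set.mem_preimage, Set.mem_setOf_eq, hP]
        rw [this]
        exact isOpen_coord N _
      have hev : ∀ᶠ k in atTop, P N (gs k) = P N l :=
        hl.eventually (hopen.mem_nhds (by simp))
      obtain ⟨M, hM⟩ := eventually_atTop.mp hev
      exact ⟨M, fun k hk => (hM k hk).trans (hM M le_rfl).symm⟩
    · -- compact closure of the lifts
      -- step 1: each coordinate takes only finitely many values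
      have hfin : ∀ N, (Set.range fun k => (σq (gs k)).1 N).Finite := by
        intro N
        by_contra hinf
        set lens : ℕ → ℕ := fun k => ((σq (gs k)).1 N).length with hlens
        -- lengths are unbounded
        have hub : ∀ C K₀, ∃ k, K₀ ≤ k ∧ C < lens k := by
          by_contra hcon
          push_neg at hcon
          obtain ⟨C, K₀, hC⟩ := hcon
          apply hinf
          apply Set.Finite.subset
            (Set.Finite.union (finite_words N C)
              ((Set.finite_Iio K₀).image (fun k => (σq (gs k)).1 N)))
          rintro L ⟨k, rfl⟩
          by_cases hk : k < K₀
          · exact Or.inr ⟨k, hk, rfl⟩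
          · refine Or.inl ⟨fun a ha => (σq (gs k)).2.1 N a ha, ?_⟩
            exact hC k (le_of_not_gt hk)
        set lenl : ℕ := ((σq l).1 N).length with hlenl
        choose f hf1 hf2 using fun C K₀ => hub C K₀
        -- a subsequence with strictly increasing lengths, all `> lenl`
        set φ : ℕ → ℕ := fun i => Nat.rec (f lenl 0) (fun _ prev => f (lens prev) (prev + 1)) i
          with hφdef
        have hφ0 : φ 0 = f lenl 0 := rfl
        have hφs : ∀ i, φ (i + 1) = f (lens (φ i)) (φ i + 1) := fun i => rfl
        have hφmono : StrictMono φ := by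
          apply strictMono_nat_of_lt_succ
          intro i
          have := hf1 (lens (φ i)) (φ i + 1)
          rw [← hφs i] at this
          omega
        have hlensmono : StrictMono (fun i => lens (φ i)) := by
          apply strictMono_nat_of_lt_succ
          intro i
          have := hf2 (lens (φ i)) (φ i + 1)
          rw [← hφs i] at this
          exact this
        have hgtl : ∀ i, lenl < lens (φ i) := by
          intro i
          have h0 : lenl < lens (φ 0) := by rw [hφ0]; exact hf2 lenl 0
          rcases Nat.eq_zero_or_pos i with rfl | hi
          · exact h0
          · exact h0.trans_le (hlensmono.monotone (Nat.zero_le i))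
        -- the set of all representatives of the subsequence is closed
        set A : Set Xinf :=
          {u : Xinf | ∃ i, ∀ m, FreeGroup.mk (u.1 m) = P m (gs (φ i))} with hA
        have hAclosed : IsClosed A := by
          apply IsSeqClosed.isClosed
          intro x v hxA hxv
          choose ι hι using hxA
          by_cases hcase : ∃ j, ∀ T, ∃ t, T ≤ t ∧ ι t = j
          · obtain ⟨j, hj⟩ := hcase
            have hCcl : IsClosed {u : Xinf | ∀ m, FreeGroup.mk (u.1 m) = P m (gs (φ j))} := by
              have : {u : Xinf | ∀ m, FreeGroup.mk (u.1 m) = P m (gs (φ j))}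
                  = ⋂ m, {u : Xinf | u.1 m ∈ {L | FreeGroup.mk L = P m (gs (φ j))}} := by
                ext u; simp [Set.mem_iInter]
              rw [this]
              exact isClosed_iInter fun m => isClosed_coord m _
            have hfreq : ∃ᶠ t in atTop,
                x t ∈ {u : Xinf | ∀ m, FreeGroup.mk (u.1 m) = P m (gs (φ j))} := by
              rw [frequently_atTop]
              intro T
              obtain ⟨t, ht, hteq⟩ := hj T
              exact ⟨t, ht, by rw [← hteq]; exact hι t⟩
            have := mem_closure_of_frequently_of_tendsto hfreq hxv
            rw [hCcl.closure_eq] at this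
            exact ⟨j, this⟩
          · exfalso
            push_neg at hcase
            choose T hT using hcase
            have hcoord : Tendsto (fun t => (x t).1 N) atTop (𝓝 (v.1 N)) :=
              ((continuous_coord N).tendsto v).comp hxv
            rw [nhds_discrete, tendsto_pure] at hcoord
            obtain ⟨T₀, hT₀⟩ := eventually_atTop.mp hcoord
            set B : ℕ := (v.1 N).length with hB
            set t : ℕ := max T₀ ((Finset.range (B + 1)).sup T) with ht
            have hιbig : B < ι t := by
              by_contra hle
              push_neg at hle
              have hmem : ι t ∈ Finset.range (B + 1) := Finset.mem_range.mpr (by omega)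
              have : T (ι t) ≤ t :=
                le_trans (Finset.le_sup hmem) (le_max_right _ _)
              exact hT (ι t) t this rfl
            -- every representative of `gs (φ (ι t))` is long at level `N`
            have hrep : Quotient.mk qsetoid (x t) = gs (φ (ι t)) :=
              mk_eq_of_proj _ _ (hι t)
            have hsub : (σq (gs (φ (ι t)))).1 N <+ (x t).1 N := by
              rw [← hrep]; exact sigma_sublist (x t) N
            have hlen1 : lens (φ (ι t)) ≤ ((x t).1 N).length := hsub.length_le
            have hxtv : (x t).1 N = v.1 N := hT₀ t (le_max_left _ _)
            have hlen2 : ι t ≤ lens (φ (ι t)) := hlensmono.le_apply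
            rw [hxtv] at hlen1
            omega
        -- the complement of the classes of the subsequence is an open nbhd of `l`
        set W : Set (Quotient qsetoid) := {g | ∀ i, g ≠ gs (φ i)} with hW
        have hpre : (Quotient.mk qsetoid) ⁻¹' W = Aᶜ := by
          ext u
          simp only [Set.mem_preimage, hW, Set.mem_setOf_eq, Set.mem_compl_iff, hA]
          constructor
          · rintro h ⟨i, hi⟩
            exact h i (mk_eq_of_proj u _ hi)
          · intro h i hi
            exact h ⟨i, fun m => by rw [← hi, hP]⟩
        have hWopen : IsOpen W := by
          rw [← isQuotientMap_qmk.isOpen_preimage, hpre]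
          exact hAclosed.isOpen_compl
        have hlW : l ∈ W := by
          intro i hli
          have : lenl = lens (φ i) := by
            rw [hlenl, hlens]
            exact congrArg (fun g => ((σq g).1 N).length) hli
          exact (hgtl i).ne' this.symm
        have hev : ∀ᶠ k in atTop, gs k ∈ W := hl.eventually (hWopen.mem_nhds hlW)
        obtain ⟨M, hM⟩ := eventually_atTop.mp hev
        exact (hM (φ M) hφmono.le_apply) M rfl
      -- step 2: conclude compactness
      set F : ℕ → Set (List (ℕ × Bool)) := fun N => Set.range fun k => (σq (gs k)).1 N
        with hF
      have hK : IsCompact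
          ((Subtype.val : Xinf → (ℕ → List (ℕ × Bool))) ⁻¹' Set.pi Set.univ F) :=
        isCompact_of_finite_coords F hfin
      apply hK.of_isClosed_subset isClosed_closure
      apply closure_minimal
      · rintro u ⟨k, rfl⟩
        intro N _
        exact ⟨k, rfl⟩
      · exact (isClosed_set_pi fun N _ => isClosed_discrete _).preimage
          continuous_subtype_val
  · rintro ⟨hconst, hcpt⟩
    choose Mc hMc using hconst
    set x : ℕ → Xinf := fun k => σq (gs k) with hx
    have hxmem : ∀ k, x k ∈ closure (Set.range fun k => σq (gs k)) :=
      fun k => subset_closure ⟨k, rfl⟩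
    obtain ⟨v, -, φ, hφ, hvlim⟩ := hcpt.tendsto_subseq hxmem
    -- all subsequential limits have the same projections
    have subkey : ∀ (ψ : ℕ → ℕ), Tendsto ψ atTop atTop → ∀ v' : Xinf,
        Tendsto (fun i => x (ψ i)) atTop (𝓝 v') →
        ∀ N, FreeGroup.mk (v'.1 N) = P N (gs (Mc N)) := by
      intro ψ hψ v' hv' N
      have hcoord : Tendsto (fun i => (x (ψ i)).1 N) atTop (𝓝 (v'.1 N)) :=
        ((continuous_coord N).tendsto v').comp hv'
      rw [nhds_discrete, tendsto_pure] at hcoord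
      have hψev : ∀ᶠ i in atTop, Mc N ≤ ψ i := hψ.eventually_ge_atTop (Mc N)
      obtain ⟨i, h1, h2⟩ := (hcoord.and hψev).exists
      rw [← h1]
      show FreeGroup.mk ((σq (gs (ψ i))).1 N) = P N (gs (Mc N))
      rw [mk_sigma (gs (ψ i)) N]
      exact hMc N (ψ i) h2
    have hvproj : ∀ N, FreeGroup.mk (v.1 N) = P N (gs (Mc N)) :=
      subkey φ hφ.tendsto_atTop v hvlim
    refine ⟨Quotient.mk qsetoid v, ?_⟩
    apply tendsto_of_subseq_tendsto
    intro ns hns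
    obtain ⟨v', -, ms, hms, hv'lim⟩ := hcpt.tendsto_subseq (fun i => hxmem (ns i))
    refine ⟨ms, ?_⟩
    have h1 : Tendsto (fun i => x (ns (ms i))) atTop (𝓝 v') := hv'lim
    have h2 : Quotient.mk qsetoid v' = Quotient.mk qsetoid v := by
      apply Quotient.sound
      intro n
      rw [subkey (fun i => ns (ms i)) (hns.comp hms.tendsto_atTop) v' h1 n, hvproj n]
    have h3 : Tendsto (fun i => Quotient.mk qsetoid (x (ns (ms i)))) atTop
        (𝓝 (Quotient.mk qsetoid v')) :=
      (continuous_qmk.tendsto v').comp h1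
    rw [h2] at h3
    have h4 : (fun i => Quotient.mk qsetoid (x (ns (ms i))))
        = fun i => gs (ns (ms i)) := by
      funext i
      exact q_sigma (gs (ns (ms i)))
    rwa [h4] at h3
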